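/- For every integer n ≥ 2, there exists a generalized Cayley graph of the dicyclic group T₄ₙ = ⟨a, b | a^{2n} = b⁴ = e, aⁿ = b², b⁻¹ab = a⁻¹⟩ with connection set of size 3 that is not connected. Specifically, with the involutory automorphism α: a ↦ a, b ↦ aⁿb, the set S = {b, a²b, a⁴b} is a generalized Cayley subset and GC(T₄ₙ, S, α) is disconnected. -/

import Mathlib

open QuaternionGroup

section Aux
variable {n : ℕ}

private lemma hnn : ((n : ZMod (2 * n)) + n) = 0 := by
  have h : ((2 * n : ℕ) : ZMod (2 * n)) = 0 := ZMod.natCast_self _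
  push_cast at h
  linear_combination h

/-- The involutory automorphism α. -/
def myα (n : ℕ) : QuaternionGroup n ≃* QuaternionGroup n where
  toFun := fun g => match g with
    | a i => a i
    | xa i => xa (i - (n : ZMod (2 * n)))
  invFun := fun g => match g with
    | a i => a i
    | xa i => xa (i - (n : ZMod (2 * n)))
  left_inv := by
    rintro (i | i)
    · rfl
    · show xa (i - (n : ZMod (2 * n)) - (n : ZMod (2 * n))) = xa i
      congr 1
      have := hnn (n := n)
      linear_combination -this
  right_inv := by
    rintro (i | i)
    · rfl
    · show xa (i - (n : ZMod (2 * n)) - (n : ZMod (2 * n))) = xa i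
      congr 1
      have := hnn (n := n)
      linear_combination -this
  map_mul' := by
    rintro (i | i) (j | j) <;>
      simp only [a_mul_a, a_mul_xa, xa_mul_a, xa_mul_xa] <;> (try rfl) <;> congr 1 <;> ring

@[simp] lemma myα_a (i : ZMod (2 * n)) : myα n (a i) = a i := rfl
@[simp] lemma myα_xa (i : ZMod (2 * n)) :
    myα n (xa i) = xa (i - (n : ZMod (2 * n))) := rfl

lemma a_inv (i : ZMod (2 * n)) : (a i : QuaternionGroup n)⁻¹ = a (-i) := rfl
lemma xa_inv (i : ZMod (2 * n)) : (xa i : QuaternionGroup n)⁻¹ = xa ((n : ZMod (2 * n)) + i) := rfl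

/-- The parity cast homomorphism. -/
def pc (n : ℕ) : ZMod (2 * n) →+* ZMod 2 :=
  ZMod.castHom (Dvd.intro n rfl) (ZMod 2)

/-- The component invariant: parity. -/
def par : QuaternionGroup n → ZMod 2
  | a i => pc n i
  | xa i => pc n i

end Aux

theorem stmt_17 (n : ℕ) (hn : 2 ≤ n) :
    ∃ α : QuaternionGroup n ≃* QuaternionGroup n,
      (∀ g, α (α g) = g) ∧
      (∀ i : ZMod (2 * n), α (QuaternionGroup.a i) = QuaternionGroup.a i) ∧
      (∀ i : ZMod (2 * n),
        α (QuaternionGroup.xa i) = QuaternionGroup.a (n : ZMod (2 * n)) * QuaternionGroup.xa i) ∧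
      ∀ S : Set (QuaternionGroup n),
        S = {QuaternionGroup.xa 0, QuaternionGroup.a 2 * QuaternionGroup.xa 0,
              QuaternionGroup.a 4 * QuaternionGroup.xa 0} →
        ((∀ g, α g⁻¹ * g ∉ S) ∧ (fun s => α s⁻¹) '' S = S) ∧
        ∀ Γ : SimpleGraph (QuaternionGroup n),
          (∀ x y, Γ.Adj x y ↔ α x⁻¹ * y ∈ S) → ¬ Γ.Connected := by
  have hinv : ∀ g : QuaternionGroup n, myα n (myα n g) = g := by
    rintro (i | i)
    · rfl
    · rw [myα_xa, myα_xa]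
      congr 1
      have := hnn (n := n)
      linear_combination -this
  refine ⟨myα n, hinv, fun i => rfl, fun i => by rw [myα_xa, a_mul_xa], ?_⟩
  intro S hS
  have hSmem : ∀ g, g ∈ S ↔ ∃ j : ZMod (2 * n), g = xa j ∧ (j = 0 ∨ j = -2 ∨ j = -4) := by
    intro g
    subst hS
    simp only [Set.mem_insert_iff, Set.mem_singleton_iff, a_mul_xa, zero_sub]
    constructor
    · rintro (h | h | h)
      exacts [⟨0, h, Or.inl rfl⟩, ⟨-2, h, Or.inr (Or.inl rfl)⟩, ⟨-4, h, Or.inr (Or.inr rfl)⟩]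
    · rintro ⟨j, rfl, (rfl | rfl | rfl)⟩
      · exact Or.inl rfl
      · exact Or.inr (Or.inl rfl)
      · exact Or.inr (Or.inr rfl)
  have hid : ∀ j : ZMod (2 * n), myα n (xa j)⁻¹ = xa j := by
    intro j
    rw [xa_inv, myα_xa]
    congr 1
    ring
  refine ⟨⟨?_, ?_⟩, ?_⟩
  · rintro (i | i) h
    · rw [a_inv, myα_a, a_mul_a, neg_add_cancel] at h
      rcases (hSmem _).mp h with ⟨j, hj, _⟩
      exact absurd hj (by intro h'; cases h')
    · rw [hid, xa_mul_xa] at h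
      rcases (hSmem _).mp h with ⟨j, hj, _⟩
      exact absurd hj (by simp)
  · ext s
    constructor
    · rintro ⟨t, ht, rfl⟩
      rcases (hSmem t).mp ht with ⟨j, rfl, _⟩
      show myα n (xa j)⁻¹ ∈ S
      rw [hid]
      exact ht
    · intro hs
      rcases (hSmem s).mp hs with ⟨j, rfl, _⟩
      exact ⟨xa j, hs, hid j⟩
  · intro Γ hΓ hconn
    have h2 : ∀ z : ZMod 2, z + z = 0 := by decide
    have hpar : ∀ x y, Γ.Adj x y → par x = par y := by
      intro x y hxy
      rw [hΓ] at hxy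
      rcases (hSmem _).mp hxy with ⟨j, hj, hj2⟩
      have hje : pc n j = 0 := by
        rcases hj2 with rfl | rfl | rfl <;>
          simp only [map_neg, map_ofNat, map_zero, neg_eq_zero] <;> decide
      match x, y with
      | a i, a k =>
        rw [a_inv, myα_a, a_mul_a] at hj
        exact absurd hj (by simp)
      | xa i, xa k =>
        rw [hid, xa_mul_xa] at hj
        exact absurd hj (by simp)
      | a i, xa k =>
        rw [a_inv, myα_a, a_mul_xa] at hj
        obtain rfl : k - -i = j := by injection hj
        rw [map_sub, map_neg, sub_neg_eq_add] at hje
        show pc n i = pc n k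
        linear_combination hje - h2 (pc n k)
      | xa i, a k =>
        rw [hid, xa_mul_a] at hj
        obtain rfl : i + k = j := by injection hj
        rw [map_add] at hje
        show pc n i = pc n k
        linear_combination hje - h2 (pc n k)
    have hwalk : ∀ x y : QuaternionGroup n, Γ.Reachable x y → par x = par y := by
      intro x y ⟨w⟩
      induction w with
      | nil => rfl
      | cons h _ ih => exact (hpar _ _ h).trans ih
    have h01 : par (a 1 : QuaternionGroup n) ≠ par (a 0 : QuaternionGroup n) := by
      show pc n 1 ≠ pc n 0
      rw [map_one, map_zero]
      decide
    exact h01 (hwalk _ _ (hconn.preconnected _ _))
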